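/- Under the hypotheses of the Euclidean Cowling–Price theorem with s > t (i.e., conditions (i) and (ii) with p, q ∈ [1,∞), k ∈ (n, n+p], l ∈ (n, n+q]), there exist infinitely many linearly independent measurable functions on ℝⁿ satisfying both conditions; specifically, for any t₀ with t < t₀ < s and any solid harmonic H of degree k ≥ 1, the function H·p_{t₀} satisfies (i) and (ii). -/

import Mathlib

open Complex MeasureTheory Real Set


private lemma aux_rpow_bound {M c : ℝ} (hM : 0 ≤ M) (hc : 0 < c) :
    ∀ r : ℝ, 0 ≤ r → (1+r) ^ M ≤ Real.exp (M^2/(4*c)) * Real.exp (c*r^2) := by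
  intro r hr
  have h1 : (1+r : ℝ) ≤ Real.exp r := by have := Real.add_one_le_exp r; linarith
  have h2 : (1+r) ^ M ≤ (Real.exp r) ^ M :=
    Real.rpow_le_rpow (by linarith) h1 hM
  have h3 : (Real.exp r) ^ M = Real.exp (r * M) := by
    rw [← Real.exp_mul]
  have h4c : (0:ℝ) < 4*c := by linarith
  have h5 : (r*M - c*r^2) * (4*c) ≤ M^2 := by nlinarith [sq_nonneg (2*c*r - M)]
  have h4 : r * M ≤ M^2/(4*c) + c*r^2 := by
    have h6 : r*M - c*r^2 ≤ M^2/(4*c) := (le_div_iff₀ h4c).2 h5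
    linarith
  calc (1+r) ^ M ≤ Real.exp (r*M) := by rw [← h3]; exact h2
    _ ≤ Real.exp (M^2/(4*c) + c*r^2) := Real.exp_le_exp.2 h4
    _ = _ := Real.exp_add _ _

private lemma aux_pow_bound (m : ℕ) {c : ℝ} (hc : 0 < c) :
    ∀ r : ℝ, 0 ≤ r → (1+r) ^ m ≤ Real.exp ((m:ℝ)^2/(4*c)) * Real.exp (c*r^2) := by
  intro r hr
  have := aux_rpow_bound (M := (m:ℝ)) (Nat.cast_nonneg m) hc r hr
  rwa [Real.rpow_natCast] at this

private lemma aux_polyC (P : Polynomial ℂ) :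
    ∃ C : ℝ, 0 ≤ C ∧ ∀ t : ℝ, ‖Polynomial.eval (t:ℂ) P‖ ≤ C * (1+|t|) ^ P.natDegree := by
  refine ⟨∑ i ∈ Finset.range (P.natDegree+1), ‖P.coeff i‖,
    Finset.sum_nonneg fun _ _ => norm_nonneg _, fun t => ?_⟩
  rw [Polynomial.eval_eq_sum_range]
  calc ‖∑ i ∈ Finset.range (P.natDegree+1), P.coeff i * (t:ℂ)^i‖
      ≤ ∑ i ∈ Finset.range (P.natDegree+1), ‖P.coeff i * (t:ℂ)^i‖ := norm_sum_le _ _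
    _ ≤ ∑ i ∈ Finset.range (P.natDegree+1), ‖P.coeff i‖ * (1+|t|) ^ P.natDegree := by
        refine Finset.sum_le_sum fun i hi => ?_
        rw [norm_mul, norm_pow, Complex.norm_real]
        gcongr
        calc |t| ^ i ≤ (1+|t|) ^ i :=
              pow_le_pow_left₀ (abs_nonneg t) (by linarith [abs_nonneg t]) i
          _ ≤ (1+|t|) ^ P.natDegree :=
              pow_le_pow_right₀ (by linarith [abs_nonneg t])
                (Nat.lt_succ_iff.mp (Finset.mem_range.mp hi))
    _ = _ := by rw [← Finset.sum_mul]

private lemma aux_iterGauss (β c₁ : ℂ) (m : ℕ) :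
    ∃ P : Polynomial ℂ, P.natDegree ≤ m ∧ ∀ t : ℝ,
      iteratedDeriv m (fun u : ℝ => c₁ * Complex.exp (-β * (u:ℂ)^2)) t
        = Polynomial.eval (t:ℂ) P * Complex.exp (-β * (t:ℂ)^2) := by
  induction m with
  | zero =>
      exact ⟨Polynomial.C c₁, by simp, fun t => by simp [iteratedDeriv_zero]⟩
  | succ m ih =>
      obtain ⟨P, hdeg, hP⟩ := ih
      refine ⟨Polynomial.derivative P - Polynomial.C (2*β) * (Polynomial.X * P), ?_, fun t => ?_⟩
      · refine le_trans (Polynomial.natDegree_sub_le _ _) (max_le ?_ ?_)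
        · exact le_trans (Polynomial.natDegree_derivative_le P) (by omega)
        · refine le_trans (Polynomial.natDegree_C_mul_le _ _) ?_
          refine le_trans (Polynomial.natDegree_mul_le) ?_
          simpa [Polynomial.natDegree_X] using by omega
      · rw [iteratedDeriv_succ, funext hP]
        have h1 : HasDerivAt (fun z : ℂ => Polynomial.eval z P * Complex.exp (-β * z^2))
            (Polynomial.eval (t:ℂ) (Polynomial.derivative P) * Complex.exp (-β * (t:ℂ)^2)
              + Polynomial.eval (t:ℂ) P * (Complex.exp (-β * (t:ℂ)^2) * (-β * (2 * (t:ℂ))))) (t:ℂ) := by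
          have hpow : HasDerivAt (fun z : ℂ => -β * z^2) (-β * (2 * (t:ℂ))) (t:ℂ) := by
            simpa [mul_comm] using ((hasDerivAt_pow 2 (t:ℂ)).const_mul (-β))
          exact (P.hasDerivAt (t:ℂ)).mul hpow.cexp
        have h2 := (h1.comp_ofReal).deriv
        rw [h2]
        simp only [Polynomial.eval_sub, Polynomial.eval_mul, Polynomial.eval_C, Polynomial.eval_X]
        ring

open FourierTransform

private lemma aux_int1d {a : ℝ} (ha : 0 < a) (m : ℕ) (c : ℝ) :
    Integrable (fun x : ℝ => (x:ℂ)^m * Complex.exp (-(a:ℂ) * (x:ℂ)^2 - Complex.I * ((x:ℝ)*c : ℝ))) := by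
  have hcont : Continuous (fun x : ℝ =>
      (x:ℂ)^m * Complex.exp (-(a:ℂ) * (x:ℂ)^2 - Complex.I * ((x:ℝ)*c : ℝ))) := by
    fun_prop
  set C := Real.exp ((m:ℝ)^2/(4*(a/2)))
  refine Integrable.mono' ((integrable_exp_neg_mul_sq (half_pos ha)).const_mul C)
    hcont.aestronglyMeasurable (Filter.Eventually.of_forall fun x => ?_)
  have hnorm : ‖(x:ℂ)^m * Complex.exp (-(a:ℂ) * (x:ℂ)^2 - Complex.I * ((x:ℝ)*c : ℝ))‖
      = |x|^m * Real.exp (-a * x^2) := by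
    rw [norm_mul, norm_pow, Complex.norm_real, Complex.norm_exp]
    congr 1
    simp [Complex.sub_re, Complex.mul_re, ← Complex.ofReal_pow]
  rw [hnorm]
  have h1 : |x|^m ≤ (1+|x|)^m :=
    pow_le_pow_left₀ (abs_nonneg x) (by linarith [abs_nonneg x]) m
  have h2 := aux_pow_bound m (half_pos ha) |x| (abs_nonneg x)
  calc |x|^m * Real.exp (-a*x^2) ≤ (C * Real.exp ((a/2)*|x|^2)) * Real.exp (-a*x^2) := by
        refine mul_le_mul (le_trans h1 h2) le_rfl (Real.exp_nonneg _) ?_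
        positivity
    _ = C * Real.exp (-(a/2) * x^2) := by
        rw [mul_assoc, ← Real.exp_add, _root_.sq_abs]; congr 2; ring
    _ ≤ C * Real.exp (-(a/2) * x^2) := le_rfl

private lemma aux_key1d {a : ℝ} (ha : 0 < a) (m : ℕ) :
    ∃ C : ℝ, 0 ≤ C ∧ ∀ y : ℝ,
      ‖∫ x : ℝ, (x:ℂ)^m * Complex.exp (-(a:ℂ) * (x:ℂ)^2 - Complex.I * ((x:ℝ)*y : ℝ))‖
        ≤ C * (1+|y|)^m * Real.exp (-(y^2/(4*a))) := by
  have hπ : (π:ℂ) ≠ 0 := Complex.ofReal_ne_zero.2 Real.pi_ne_zero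
  have ha' : (a:ℂ) ≠ 0 := Complex.ofReal_ne_zero.2 ha.ne'
  set G : ℝ → ℂ := fun x => Complex.exp (-(a:ℂ) * (x:ℂ)^2) with hGdef
  -- Fourier transform of the Gaussian
  have hb : (0:ℝ) < ((a:ℂ)/(π:ℂ)).re := by
    have : ((a:ℂ)/(π:ℂ)) = ((a/π : ℝ) : ℂ) := by push_cast; ring
    rw [this, Complex.ofReal_re]; positivity
  have hGf : 𝓕 G = fun t : ℝ => (1/((a:ℂ)/π)^((1:ℂ)/2)) *
      Complex.exp (-((π^2/a : ℝ):ℂ) * (t:ℂ)^2) := by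
    have h0 := fourier_gaussian_pi' hb 0
    have hfun : (fun x : ℝ => Complex.exp (-(π:ℂ) * ((a:ℂ)/π) * (x:ℂ)^2 + 2*π*0*(x:ℂ))) = G := by
      funext x; congr 1; field_simp; ring
    rw [hfun] at h0
    rw [h0]
    funext t
    have he : (-(π:ℂ)/((a:ℂ)/π)) * ((t:ℂ) + Complex.I*0)^2 = -((π^2/a : ℝ):ℂ) * (t:ℂ)^2 := by
      push_cast
      rw [div_div_eq_mul_div]
      ring
    rw [he]
  -- integrability hypotheses
  have hInt : ∀ k : ℕ, (k:ℕ∞) ≤ (m:ℕ∞) → Integrable (fun x : ℝ => x^k • G x) := by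
    intro k _
    have := aux_int1d ha k 0
    simpa [hGdef, smul_eq_mul, Complex.ofReal_zero, mul_zero, sub_zero] using this
  have hiter := Real.iteratedDeriv_fourier (N := (m:ℕ∞)) hInt le_rfl
  -- polynomial form of iterated derivative
  obtain ⟨P, hPdeg, hP⟩ := aux_iterGauss ((π^2/a : ℝ):ℂ) (1/((a:ℂ)/π)^((1:ℂ)/2)) m
  obtain ⟨CP, hCP0, hCP⟩ := aux_polyC P
  refine ⟨CP, hCP0, fun y => ?_⟩
  set w : ℝ := y/(2*π) with hw
  set J : ℂ := ∫ x : ℝ, (x:ℂ)^m * Complex.exp (-(a:ℂ)*(x:ℂ)^2 - Complex.I*((x*y : ℝ):ℂ)) with hJ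
  have hπpos : (0:ℝ) < π := Real.pi_pos
  have hπ1 : (1:ℝ) ≤ 2*π := by nlinarith [Real.pi_gt_three]
  have hJint : ∫ x : ℝ, Complex.exp (((-2*π*x*w:ℝ):ℂ) * Complex.I) • ((-2*(π:ℂ)*Complex.I*(x:ℂ))^m • G x)
      = (-2*(π:ℂ)*Complex.I)^m * J := by
    rw [hJ, ← integral_const_mul]
    congr 1; funext x
    have e0 : -2*π*x*w = -(x*y) := by rw [hw]; field_simp
    have e1 : Complex.exp (((-2*π*x*w:ℝ):ℂ)*Complex.I) * Complex.exp (-(a:ℂ)*(x:ℂ)^2)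
        = Complex.exp (-(a:ℂ)*(x:ℂ)^2 - Complex.I*((x*y : ℝ):ℂ)) := by
      rw [← Complex.exp_add]; congr 1
      rw [e0]; push_cast; ring
    calc Complex.exp (((-2*π*x*w:ℝ):ℂ) * Complex.I) • ((-2*(π:ℂ)*Complex.I*(x:ℂ))^m • G x)
        = ((-2*(π:ℂ)*Complex.I)^m * (x:ℂ)^m) *
            (Complex.exp (((-2*π*x*w:ℝ):ℂ)*Complex.I) * Complex.exp (-(a:ℂ)*(x:ℂ)^2)) := by
          simp only [smul_eq_mul, hGdef]; ring
      _ = ((-2*(π:ℂ)*Complex.I)^m * (x:ℂ)^m) * Complex.exp (-(a:ℂ)*(x:ℂ)^2 - Complex.I*((x*y : ℝ):ℂ)) := by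
          rw [e1]
      _ = (-2*(π:ℂ)*Complex.I)^m * ((x:ℂ)^m * Complex.exp (-(a:ℂ)*(x:ℂ)^2 - Complex.I*((x*y : ℝ):ℂ))) := by
          ring
  have hkey : (-2*(π:ℂ)*Complex.I)^m * J
      = Polynomial.eval (w:ℂ) P * Complex.exp (-((π^2/a : ℝ):ℂ) * (w:ℂ)^2) := by
    rw [← hJint]
    have h1 := congrFun hiter w
    rw [fourier_real_eq_integral_exp_smul] at h1
    rw [← h1, hGf, hP w]
  have hnormc : ‖(-2*(π:ℂ)*Complex.I)^m‖ = (2*π)^m := by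
    rw [norm_pow]
    have : ‖(-2*(π:ℂ)*Complex.I)‖ = 2*π := by
      simp [abs_of_pos hπpos]
    rw [this]
  have hJle : ‖J‖ ≤ ‖(-2*(π:ℂ)*Complex.I)^m * J‖ := by
    rw [norm_mul, hnormc]
    have h1 : (1:ℝ) ≤ (2*π)^m := one_le_pow₀ hπ1
    nlinarith [norm_nonneg J]
  have hexpnorm : ‖Complex.exp (-((π^2/a : ℝ):ℂ) * (w:ℂ)^2)‖ = Real.exp (-(y^2/(4*a))) := by
    have harg : -((π^2/a : ℝ):ℂ) * (w:ℂ)^2 = ((-(y^2/(4*a)) : ℝ) : ℂ) := by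
      rw [hw]; push_cast; field_simp; ring
    rw [harg]
    exact Complex.norm_exp_ofReal _
  have hwy : |w| ≤ |y| := by
    rw [hw, abs_div]
    refine div_le_self (abs_nonneg y) ?_
    rw [abs_of_pos (by linarith : (0:ℝ) < 2*π)]; linarith
  calc ‖J‖ ≤ ‖(-2*(π:ℂ)*Complex.I)^m * J‖ := hJle
    _ = ‖Polynomial.eval (w:ℂ) P‖ * ‖Complex.exp (-((π^2/a : ℝ):ℂ) * (w:ℂ)^2)‖ := by
        rw [hkey, norm_mul]
    _ ≤ (CP * (1+|w|)^P.natDegree) * Real.exp (-(y^2/(4*a))) := by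
        rw [hexpnorm]; exact mul_le_mul_of_nonneg_right (hCP w) (Real.exp_nonneg _)
    _ ≤ (CP * (1+|y|)^m) * Real.exp (-(y^2/(4*a))) := by
        refine mul_le_mul_of_nonneg_right (mul_le_mul_of_nonneg_left ?_ hCP0) (Real.exp_nonneg _)
        calc (1+|w|)^P.natDegree ≤ (1+|w|)^m :=
              pow_le_pow_right₀ (by linarith [abs_nonneg w]) hPdeg
          _ ≤ (1+|y|)^m := pow_le_pow_left₀ (by linarith [abs_nonneg w]) (by linarith) m
    _ = CP * (1+|y|)^m * Real.exp (-(y^2/(4*a))) := by ring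

section ND
variable {n : ℕ}

private lemma aux_normsq (x : EuclideanSpace ℝ (Fin n)) : ‖x‖^2 = ∑ i, (x i)^2 := by
  rw [EuclideanSpace.norm_eq]
  rw [Real.sq_sqrt (Finset.sum_nonneg fun i _ => sq_nonneg _)]
  simp [sq_abs]

private lemma aux_coord (x : EuclideanSpace ℝ (Fin n)) (i : Fin n) : |x i| ≤ ‖x‖ := by
  have h1 : (x i)^2 ≤ ‖x‖^2 := by
    rw [aux_normsq]
    exact Finset.single_le_sum (f := fun j => (x j)^2) (fun j _ => sq_nonneg _) (Finset.mem_univ i)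
  calc |x i| = Real.sqrt ((x i)^2) := (Real.sqrt_sq_eq_abs _).symm
    _ ≤ Real.sqrt (‖x‖^2) := Real.sqrt_le_sqrt h1
    _ = ‖x‖ := Real.sqrt_sq (norm_nonneg x)

private lemma aux_inner (x y : EuclideanSpace ℝ (Fin n)) : (inner ℝ x y : ℝ) = ∑ i, x i * y i := by
  rw [PiLp.inner_apply]
  simp [RCLike.inner_apply, conj_trivial, mul_comm]

private lemma aux_transfer_integral (g : EuclideanSpace ℝ (Fin n) → ℂ) :
    ∫ x : EuclideanSpace ℝ (Fin n), g x = ∫ x : Fin n → ℝ, g (WithLp.toLp 2 x) :=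
  ((MeasurePreserving.symm _
    (EuclideanSpace.volume_preserving_symm_measurableEquiv_toLp (Fin n))).integral_comp' g).symm

private lemma aux_transfer_integrable (g : EuclideanSpace ℝ (Fin n) → ℝ)
    (hg : Integrable (fun x : Fin n → ℝ => g (WithLp.toLp 2 x))) : Integrable g :=
  ((MeasurePreserving.symm _
    (EuclideanSpace.volume_preserving_symm_measurableEquiv_toLp (Fin n))).integrable_comp_emb
    (MeasurableEquiv.measurableEmbedding _)).1 hg

private lemma aux_gaussND {b : ℝ} (hb : 0 < b) :
    Integrable (fun x : EuclideanSpace ℝ (Fin n) => Real.exp (-b * ‖x‖^2)) := by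
  apply aux_transfer_integrable
  have hpt : ∀ x : EuclideanSpace ℝ (Fin n), ∏ i, Real.exp (-b*(x i)^2)
      = Real.exp (-b * ‖x‖^2) := by
    intro x
    rw [aux_normsq x, ← Real.exp_sum]
    congr 1
    rw [Finset.mul_sum]
  exact (Integrable.fintype_prod (f := fun _ t => Real.exp (-b*t^2))
    (fun i => integrable_exp_neg_mul_sq hb)).congr
      (Filter.Eventually.of_forall (fun x : Fin n → ℝ => hpt (WithLp.toLp 2 x)))

private lemma aux_integrable_of_bound (h : EuclideanSpace ℝ (Fin n) → ℝ)
    (hm : AEStronglyMeasurable h (volume : Measure (EuclideanSpace ℝ (Fin n))))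
    (C M c : ℝ) (hC : 0 ≤ C) (hM : 0 ≤ M) (hc : 0 < c)
    (hb : ∀ x, ‖h x‖ ≤ C * (1+‖x‖) ^ M * Real.exp (-c*‖x‖^2)) : Integrable h := by
  set C₂ := Real.exp (M^2/(4*(c/2)))
  refine Integrable.mono' ((aux_gaussND (half_pos hc)).const_mul (C * C₂)) hm
    (Filter.Eventually.of_forall fun x => ?_)
  have h1 := aux_rpow_bound hM (half_pos hc) ‖x‖ (norm_nonneg x)
  calc ‖h x‖ ≤ C * (1+‖x‖) ^ M * Real.exp (-c*‖x‖^2) := hb x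
    _ ≤ C * (C₂ * Real.exp ((c/2)*‖x‖^2)) * Real.exp (-c*‖x‖^2) := by
        refine mul_le_mul_of_nonneg_right (mul_le_mul_of_nonneg_left h1 hC) (Real.exp_nonneg _)
    _ = C * C₂ * Real.exp (-(c/2)*‖x‖^2) := by
        rw [show C * (C₂ * Real.exp ((c/2)*‖x‖^2)) * Real.exp (-c*‖x‖^2)
            = C * C₂ * (Real.exp ((c/2)*‖x‖^2) * Real.exp (-c*‖x‖^2)) from by ring,
          ← Real.exp_add]
        congr 2
        ring

private lemma aux_evalbound (H : MvPolynomial (Fin n) ℝ) :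
    ∃ C : ℝ, 0 ≤ C ∧ ∀ x : EuclideanSpace ℝ (Fin n),
      |MvPolynomial.eval (x : Fin n → ℝ) H| ≤ C * (1+‖x‖) ^ H.totalDegree := by
  refine ⟨∑ u ∈ H.support, |MvPolynomial.coeff u H|,
    Finset.sum_nonneg fun _ _ => abs_nonneg _, fun x => ?_⟩
  rw [MvPolynomial.eval_eq']
  calc |∑ u ∈ H.support, MvPolynomial.coeff u H * ∏ i, x i ^ u i|
      ≤ ∑ u ∈ H.support, |MvPolynomial.coeff u H * ∏ i, x i ^ u i| :=
        Finset.abs_sum_le_sum_abs _ _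
    _ ≤ ∑ u ∈ H.support, |MvPolynomial.coeff u H| * (1+‖x‖) ^ H.totalDegree := by
        refine Finset.sum_le_sum fun u hu => ?_
        rw [abs_mul]
        refine mul_le_mul_of_nonneg_left ?_ (abs_nonneg _)
        calc |∏ i, x i ^ u i| ≤ ∏ i, (1+‖x‖) ^ u i := by
              rw [Finset.abs_prod]
              refine Finset.prod_le_prod (fun i _ => abs_nonneg _) fun i _ => ?_
              rw [_root_.abs_pow]
              refine pow_le_pow_left₀ (abs_nonneg _) ?_ _
              linarith [aux_coord x i]
          _ = (1+‖x‖) ^ (∑ i, u i) := by rw [Finset.prod_pow_eq_pow_sum]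
          _ ≤ (1+‖x‖) ^ H.totalDegree := by
              refine pow_le_pow_right₀ (by linarith [norm_nonneg x]) ?_
              have h2 := MvPolynomial.le_totalDegree hu
              rwa [Finsupp.sum_fintype _ _ (fun i => rfl)] at h2
    _ = _ := by rw [← Finset.sum_mul]

private lemma aux_keyND {a : ℝ} (ha : 0 < a) (c₀ : ℝ) (H : MvPolynomial (Fin n) ℝ)
    (f : EuclideanSpace ℝ (Fin n) → ℂ)
    (hf : ∀ x, f x = ((c₀ * MvPolynomial.eval (x : Fin n → ℝ) H * Real.exp (-a * ‖x‖^2) : ℝ) : ℂ)) :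
    ∃ C : ℝ, 0 ≤ C ∧ ∀ y : EuclideanSpace ℝ (Fin n),
      ‖∫ x : EuclideanSpace ℝ (Fin n), f x * Complex.exp (-Complex.I * ((inner ℝ x y : ℝ) : ℂ))‖
        ≤ C * (1+‖y‖) ^ H.totalDegree * Real.exp (-(‖y‖^2/(4*a))) := by
  choose C1 hC10 hC1 using fun m => aux_key1d ha m
  set D := H.totalDegree with hD
  refine ⟨∑ u ∈ H.support, |c₀ * MvPolynomial.coeff u H| * ∏ i, C1 (u i),
    Finset.sum_nonneg fun u _ => mul_nonneg (abs_nonneg _)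
      (Finset.prod_nonneg fun i _ => hC10 _), fun y => ?_⟩
  have hpt : ∀ x : EuclideanSpace ℝ (Fin n),
      f x * Complex.exp (-Complex.I * ((inner ℝ x y : ℝ):ℂ))
        = ∑ u ∈ H.support, ((c₀ * MvPolynomial.coeff u H : ℝ) : ℂ) *
            ∏ i, ((x i : ℂ)^(u i) *
              Complex.exp (-(a:ℂ)*(x i:ℂ)^2 - Complex.I*((x i * y i : ℝ):ℂ))) := by
    intro x
    have hprodu : ∀ u : Fin n →₀ ℕ,
        (∏ i, ((x i : ℂ)^(u i) *
          Complex.exp (-(a:ℂ)*(x i:ℂ)^2 - Complex.I*((x i :ℂ) * (y i :ℂ)))))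
        = (∏ i, (x i:ℂ)^(u i)) *
          (Complex.exp (-(a:ℂ) * ((‖x‖:ℝ):ℂ)^2) *
            Complex.exp (-Complex.I*((inner ℝ x y : ℝ):ℂ))) := by
      intro u
      rw [Finset.prod_mul_distrib, ← Complex.exp_sum]
      congr 1
      rw [← Complex.exp_add]
      congr 1
      rw [show (-(a:ℂ) * ((‖x‖:ℝ):ℂ)^2) = -(a:ℂ) * ((‖x‖^2 : ℝ):ℂ) from by push_cast; ring,
        aux_normsq x, aux_inner x y]
      push_cast
      rw [Finset.sum_sub_distrib]
      rw [show -Complex.I * (∑ i, (x i:ℂ) * (y i:ℂ))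
          = -(∑ i, Complex.I * ((x i:ℂ) * (y i:ℂ))) from by rw [neg_mul, Finset.mul_sum],
        ← sub_eq_add_neg]
      congr 1
      rw [neg_mul, Finset.mul_sum, ← Finset.sum_neg_distrib]
      exact Finset.sum_congr rfl fun i _ => by ring
    rw [hf x, MvPolynomial.eval_eq']
    push_cast
    rw [Finset.mul_sum, Finset.sum_mul, Finset.sum_mul]
    refine Finset.sum_congr rfl fun u hu => ?_
    rw [hprodu u]
    ring
  have hintu : ∀ u : Fin n →₀ ℕ, Integrable (fun x : Fin n → ℝ =>
      ((c₀ * MvPolynomial.coeff u H : ℝ) : ℂ) *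
        ∏ i, ((x i : ℂ)^(u i) *
          Complex.exp (-(a:ℂ)*(x i:ℂ)^2 - Complex.I*((x i * y i : ℝ):ℂ)))) := by
    intro u
    exact (Integrable.fintype_prod (f := fun i (t : ℝ) =>
      (t:ℂ)^(u i) * Complex.exp (-(a:ℂ)*(t:ℂ)^2 - Complex.I*((t * y i : ℝ):ℂ)))
      (fun i => aux_int1d ha (u i) (y i))).const_mul _
  have hval : ∫ x : EuclideanSpace ℝ (Fin n), f x * Complex.exp (-Complex.I * ((inner ℝ x y : ℝ):ℂ))
      = ∑ u ∈ H.support, ((c₀ * MvPolynomial.coeff u H : ℝ) : ℂ) *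
          ∏ i, ∫ t : ℝ, (t:ℂ)^(u i) *
            Complex.exp (-(a:ℂ)*(t:ℂ)^2 - Complex.I*((t * y i : ℝ):ℂ)) := by
    rw [aux_transfer_integral (fun x => f x * Complex.exp (-Complex.I * ((inner ℝ x y : ℝ):ℂ)))]
    rw [funext (fun x : Fin n → ℝ => hpt (WithLp.toLp 2 x))]
    rw [integral_finset_sum _ (fun u _ => hintu u)]
    refine Finset.sum_congr rfl fun u hu => ?_
    rw [integral_const_mul]
    congr 1
    exact integral_fintype_prod_eq_prod (fun i (t : ℝ) =>
      (t:ℂ)^(u i) * Complex.exp (-(a:ℂ)*(t:ℂ)^2 - Complex.I*((t * y i : ℝ):ℂ)))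
  rw [hval]
  have hexp : ∏ i, Real.exp (-((y i)^2/(4*a))) = Real.exp (-(‖y‖^2/(4*a))) := by
    rw [← Real.exp_sum]
    congr 1
    rw [aux_normsq y, Finset.sum_div, Finset.sum_neg_distrib]
  calc ‖∑ u ∈ H.support, ((c₀ * MvPolynomial.coeff u H : ℝ) : ℂ) *
          ∏ i, ∫ t : ℝ, (t:ℂ)^(u i) *
            Complex.exp (-(a:ℂ)*(t:ℂ)^2 - Complex.I*((t * y i : ℝ):ℂ))‖
      ≤ ∑ u ∈ H.support, |c₀ * MvPolynomial.coeff u H| *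
          ∏ i, ‖∫ t : ℝ, (t:ℂ)^(u i) *
            Complex.exp (-(a:ℂ)*(t:ℂ)^2 - Complex.I*((t * y i : ℝ):ℂ))‖ := by
        refine le_trans (norm_sum_le _ _) (Finset.sum_le_sum fun u _ => ?_)
        rw [norm_mul, Complex.norm_real, norm_prod, Real.norm_eq_abs]
    _ ≤ ∑ u ∈ H.support, |c₀ * MvPolynomial.coeff u H| *
          ∏ i, (C1 (u i) * (1+|y i|)^(u i) * Real.exp (-((y i)^2/(4*a)))) := by
        refine Finset.sum_le_sum fun u _ => mul_le_mul_of_nonneg_left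
          (Finset.prod_le_prod (fun i _ => norm_nonneg _) fun i _ => hC1 (u i) (y i))
          (abs_nonneg _)
    _ = ∑ u ∈ H.support, (|c₀ * MvPolynomial.coeff u H| * ∏ i, C1 (u i)) *
          ((∏ i, (1+|y i|)^(u i)) * Real.exp (-(‖y‖^2/(4*a)))) := by
        refine Finset.sum_congr rfl fun u _ => ?_
        rw [Finset.prod_mul_distrib, Finset.prod_mul_distrib, hexp]
        ring
    _ ≤ ∑ u ∈ H.support, (|c₀ * MvPolynomial.coeff u H| * ∏ i, C1 (u i)) *
          ((1+‖y‖)^D * Real.exp (-(‖y‖^2/(4*a)))) := by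
        refine Finset.sum_le_sum fun u hu => mul_le_mul_of_nonneg_left
          (mul_le_mul_of_nonneg_right ?_ (Real.exp_nonneg _))
          (mul_nonneg (abs_nonneg _) (Finset.prod_nonneg fun i _ => hC10 _))
        calc ∏ i, (1+|y i|)^(u i) ≤ ∏ i, (1+‖y‖)^(u i) := by
              refine Finset.prod_le_prod (fun i _ => pow_nonneg (by linarith [abs_nonneg (y i)]) _)
                (fun i _ => pow_le_pow_left₀ (by linarith [abs_nonneg (y i)])
                  (by linarith [aux_coord y i]) _)
          _ = (1+‖y‖) ^ (∑ i, u i) := by rw [Finset.prod_pow_eq_pow_sum]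
          _ ≤ (1+‖y‖) ^ D := by
              refine pow_le_pow_right₀ (by linarith [norm_nonneg y]) ?_
              have h2 := MvPolynomial.le_totalDegree hu
              rwa [Finsupp.sum_fintype _ _ (fun i => rfl)] at h2
    _ = (∑ u ∈ H.support, |c₀ * MvPolynomial.coeff u H| * ∏ i, C1 (u i)) *
          (1+‖y‖)^D * Real.exp (-(‖y‖^2/(4*a))) := by
        rw [← Finset.sum_mul]
        ring

end ND

private lemma aux_cond_integrable {n : ℕ} (g : EuclideanSpace ℝ (Fin n) → ℂ)
    (hgc : Continuous g) {p k A b W : ℝ} (D : ℕ)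
    (hp : 0 < p) (hk : 0 < k) (hA : 0 ≤ A) (hW : W < p * b)
    (hg : ∀ x, ‖g x‖ ≤ A * (1+‖x‖)^D * Real.exp (-b * ‖x‖^2)) :
    Integrable (fun x : EuclideanSpace ℝ (Fin n) =>
      ‖g x‖^p * Real.exp (W * ‖x‖^2) / (1+‖x‖)^k) := by
  have hone : ∀ x : EuclideanSpace ℝ (Fin n), (0:ℝ) < 1 + ‖x‖ :=
    fun x => by linarith [norm_nonneg x]
  have hcont : Continuous (fun x : EuclideanSpace ℝ (Fin n) =>
      ‖g x‖^p * Real.exp (W * ‖x‖^2) / (1+‖x‖)^k) := by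
    refine Continuous.div ?_ ?_ (fun x => (Real.rpow_pos_of_pos (hone x) k).ne')
    · exact (hgc.norm.rpow_const (fun x => Or.inr hp.le)).mul
        (Real.continuous_exp.comp (continuous_const.mul (continuous_norm.pow 2)))
    · exact (continuous_const.add continuous_norm).rpow_const (fun x => Or.inl (hone x).ne')
  refine aux_integrable_of_bound _ hcont.aestronglyMeasurable (A^p) ((D:ℝ)*p) (p*b - W)
    (Real.rpow_nonneg hA p) (by positivity) (by linarith) (fun x => ?_)
  set r := ‖x‖
  have hr : 0 ≤ r := norm_nonneg x
  have h1 : ‖g x‖^p ≤ A^p * (1+r)^((D:ℝ)*p) * Real.exp (-b*r^2*p) := by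
    have h2 := Real.rpow_le_rpow (norm_nonneg (g x)) (hg x) hp.le
    refine le_trans h2 (le_of_eq ?_)
    rw [Real.mul_rpow (mul_nonneg hA (pow_nonneg (by linarith) D)) (Real.exp_nonneg _),
      Real.mul_rpow hA (pow_nonneg (by linarith) D),
      ← Real.rpow_natCast (1+r) D, ← Real.rpow_mul (by linarith), ← Real.exp_mul]
  have habs : ‖‖g x‖^p * Real.exp (W * r^2) / (1+r)^k‖
      = ‖g x‖^p * Real.exp (W * r^2) / (1+r)^k := by
    rw [Real.norm_eq_abs, _root_.abs_of_nonneg]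
    positivity
  rw [habs]
  have hk1 : (1:ℝ) ≤ (1+r)^k := Real.one_le_rpow (by linarith) hk.le
  calc ‖g x‖^p * Real.exp (W * r^2) / (1+r)^k
      ≤ ‖g x‖^p * Real.exp (W * r^2) := by
        refine div_le_self (by positivity) hk1
    _ ≤ (A^p * (1+r)^((D:ℝ)*p) * Real.exp (-b*r^2*p)) * Real.exp (W * r^2) := by
        exact mul_le_mul_of_nonneg_right h1 (Real.exp_nonneg _)
    _ = A^p * (1+r)^((D:ℝ)*p) * Real.exp (-(p*b - W)*r^2) := by
        rw [show (A^p * (1+r)^((D:ℝ)*p) * Real.exp (-b*r^2*p)) * Real.exp (W * r^2)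
            = A^p * (1+r)^((D:ℝ)*p) * (Real.exp (-b*r^2*p) * Real.exp (W * r^2)) from by ring,
          ← Real.exp_add]
        congr 2
        ring

private lemma aux_workhorse {n : ℕ} (p q s t a c₀ k l : ℝ)
    (hp : 1 ≤ p) (hq : 1 ≤ q) (hs : 0 < s) (ht : 0 < t) (ha0 : 0 < a)
    (ha1 : 1/(4*s) < a) (ha2 : t < 1/(4*a)) (hk : 0 < k) (hl : 0 < l)
    (H : MvPolynomial (Fin n) ℝ) (f fhat : EuclideanSpace ℝ (Fin n) → ℂ)
    (hf : ∀ x, f x = ((c₀ * MvPolynomial.eval (x : Fin n → ℝ) H * Real.exp (-a * ‖x‖^2) : ℝ) : ℂ))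
    (hfhat : ∀ y, fhat y = (((2*π) ^ (-(n:ℝ)/2) : ℝ) : ℂ) *
      ∫ x : EuclideanSpace ℝ (Fin n), f x * Complex.exp (-Complex.I * (inner ℝ x y : ℝ))) :
    Integrable (fun x : EuclideanSpace ℝ (Fin n) =>
      ‖f x‖ ^ p * Real.exp (p / (4 * s) * ‖x‖ ^ 2) / (1 + ‖x‖) ^ k) ∧
    Integrable (fun y : EuclideanSpace ℝ (Fin n) =>
      ‖fhat y‖ ^ q * Real.exp (q * t * ‖y‖ ^ 2) / (1 + ‖y‖) ^ l) := by
  obtain ⟨CH, hCH0, hCH⟩ := aux_evalbound H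
  set D := H.totalDegree with hD
  -- continuity of f
  have hfc : Continuous f := by
    rw [funext hf]
    refine Complex.continuous_ofReal.comp ?_
    refine Continuous.mul (Continuous.mul continuous_const ?_)
      (Real.continuous_exp.comp (continuous_const.mul (continuous_norm.pow 2)))
    exact (MvPolynomial.continuous_eval H).comp (PiLp.continuous_ofLp (p := 2) (β := fun _ : Fin n => ℝ))
  -- norm bound for f
  have hfb : ∀ x, ‖f x‖ ≤ (|c₀| * CH) * (1+‖x‖)^D * Real.exp (-a * ‖x‖^2) := by
    intro x
    rw [hf x, Complex.norm_real, Real.norm_eq_abs, abs_mul, abs_mul,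
      abs_of_pos (Real.exp_pos _)]
    refine mul_le_mul_of_nonneg_right ?_ (Real.exp_nonneg _)
    rw [mul_assoc]
    exact mul_le_mul_of_nonneg_left (hCH x) (abs_nonneg c₀)
  constructor
  · -- condition (i)
    have hb : p / (4*s) < p * a := by
      have := (mul_lt_mul_of_pos_left ha1 (by linarith : (0:ℝ) < p))
      calc p / (4*s) = p * (1/(4*s)) := by ring
        _ < p * a := this
    exact aux_cond_integrable f hfc D (by linarith) hk
      (mul_nonneg (abs_nonneg _) hCH0) hb hfb
  · -- condition (ii)
    obtain ⟨CB, hCB0, hCB⟩ := aux_keyND ha0 c₀ H f hf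
    set c₂ : ℝ := |(2*π) ^ (-(n:ℝ)/2)|
    have hc₂ : 0 ≤ c₂ := abs_nonneg _
    -- Integrability of ‖f‖
    have hIntf : Integrable f := by
      refine Integrable.mono' (g := fun x : EuclideanSpace ℝ (Fin n) =>
        (|c₀| * CH) * (1+‖x‖)^((D:ℝ)) * Real.exp (-a * ‖x‖^2)) ?_ hfc.aestronglyMeasurable
        (Filter.Eventually.of_forall fun x => ?_)
      · have := aux_integrable_of_bound
          (fun x : EuclideanSpace ℝ (Fin n) => (|c₀| * CH) * (1+‖x‖)^((D:ℝ)) * Real.exp (-a * ‖x‖^2))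
          ?_ (|c₀| * CH) ((D:ℝ)) a (mul_nonneg (abs_nonneg _) hCH0) (Nat.cast_nonneg D) ha0 ?_
        · exact this
        · refine Continuous.aestronglyMeasurable ?_
          refine (Continuous.mul (continuous_const.mul ?_)
            (Real.continuous_exp.comp (continuous_const.mul (continuous_norm.pow 2))))
          exact (continuous_const.add continuous_norm).rpow_const
            (fun x => Or.inr (Nat.cast_nonneg D))
        · intro x
          rw [Real.norm_eq_abs, _root_.abs_of_nonneg (by positivity)]
      · show ‖f x‖ ≤ (|c₀| * CH) * (1+‖x‖)^((D:ℝ)) * Real.exp (-a * ‖x‖^2)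
        rw [Real.rpow_natCast]
        exact hfb x
    -- continuity of fhat
    have hfhatc : Continuous fhat := by
      rw [funext hfhat]
      refine continuous_const.mul ?_
      refine continuous_of_dominated (bound := fun x => ‖f x‖) ?_ ?_ hIntf.norm ?_
      · intro y
        refine Continuous.aestronglyMeasurable (hfc.mul ?_)
        exact Complex.continuous_exp.comp
          ((continuous_const.mul (Complex.continuous_ofReal.comp
            (Continuous.inner continuous_id continuous_const))))
      · intro y
        refine Filter.Eventually.of_forall fun x => ?_
        rw [norm_mul]
        have h1 : ‖Complex.exp (-Complex.I * ((inner ℝ x y : ℝ):ℂ))‖ = 1 := by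
          rw [show -Complex.I * ((inner ℝ x y : ℝ):ℂ)
              = ((-(inner ℝ x y : ℝ) : ℝ):ℂ) * Complex.I from by push_cast; ring]
          exact Complex.norm_exp_ofReal_mul_I _
        rw [h1, mul_one]
      · refine Filter.Eventually.of_forall fun x => ?_
        refine continuous_const.mul ?_
        exact Complex.continuous_exp.comp
          ((continuous_const.mul (Complex.continuous_ofReal.comp
            (Continuous.inner continuous_const continuous_id))))
    -- norm bound for fhat
    have hfhatb : ∀ y, ‖fhat y‖ ≤ (c₂ * CB) * (1+‖y‖)^D * Real.exp (-(1/(4*a)) * ‖y‖^2) := by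
      intro y
      rw [hfhat y, norm_mul, Complex.norm_real, Real.norm_eq_abs]
      have h2 := hCB y
      calc c₂ * ‖∫ x : EuclideanSpace ℝ (Fin n), f x * Complex.exp (-Complex.I * ((inner ℝ x y : ℝ):ℂ))‖
          ≤ c₂ * (CB * (1+‖y‖)^D * Real.exp (-(‖y‖^2/(4*a)))) :=
            mul_le_mul_of_nonneg_left h2 hc₂
        _ = (c₂ * CB) * (1+‖y‖)^D * Real.exp (-(1/(4*a)) * ‖y‖^2) := by
            rw [show -(‖y‖^2/(4*a)) = -(1/(4*a)) * ‖y‖^2 from by ring]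
            ring
    have hb2 : q * t < q * (1/(4*a)) := mul_lt_mul_of_pos_left ha2 (by linarith)
    exact aux_cond_integrable fhat hfhatc D (by linarith) hl
      (mul_nonneg hc₂ hCB0) hb2 hfhatb


/-- **Sharpness when `s > t`** (Theorem 3.1(c)). For `s > t`, any `t₀ ∈ (t, s)` and
any solid harmonic `H` of degree `d ≥ 1` (the evaluation of a nonzero harmonic
homogeneous polynomial), the function `H · p_{t₀}` satisfies the Cowling–Price
conditions (i) and (ii); moreover there are infinitely many linearly independent
functions satisfying (i) and (ii). -/
theorem stmt_6 (n : ℕ) (hn : 2 ≤ n) (p q s t k l : ℝ)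
    (hp : 1 ≤ p) (hq : 1 ≤ q) (ht : 0 < t) (hst : t < s)
    (hk : k ∈ Ioc (n : ℝ) (n + p)) (hl : l ∈ Ioc (n : ℝ) (n + q)) :
    (∀ t₀ : ℝ, t < t₀ → t₀ < s →
      ∀ (d : ℕ), 1 ≤ d → ∀ H : MvPolynomial (Fin n) ℝ, H ≠ 0 →
      H.IsHomogeneous d → (∑ i, MvPolynomial.pderiv i (MvPolynomial.pderiv i H)) = 0 →
      ∀ f : EuclideanSpace ℝ (Fin n) → ℂ,
      (∀ x, f x = ((MvPolynomial.eval (x : Fin n → ℝ) H *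
          ((4 * π * t₀) ^ (-(n : ℝ) / 2) * Real.exp (-‖x‖ ^ 2 / (4 * t₀))) : ℝ) : ℂ)) →
      ∀ fhat : EuclideanSpace ℝ (Fin n) → ℂ,
      (∀ y, fhat y = (((2 * π) ^ (-(n : ℝ) / 2) : ℝ) : ℂ) *
        ∫ x : EuclideanSpace ℝ (Fin n), f x *
          Complex.exp (-Complex.I * (inner ℝ x y : ℝ))) →
      Integrable (fun x : EuclideanSpace ℝ (Fin n) =>
        ‖f x‖ ^ p * Real.exp (p / (4 * s) * ‖x‖ ^ 2) / (1 + ‖x‖) ^ k) ∧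
      Integrable (fun y : EuclideanSpace ℝ (Fin n) =>
        ‖fhat y‖ ^ q * Real.exp (q * t * ‖y‖ ^ 2) / (1 + ‖y‖) ^ l)) ∧
    (∃ g : ℕ → (EuclideanSpace ℝ (Fin n) → ℂ), LinearIndependent ℂ g ∧
      ∀ j : ℕ, Integrable (fun x : EuclideanSpace ℝ (Fin n) =>
          ‖g j x‖ ^ p * Real.exp (p / (4 * s) * ‖x‖ ^ 2) / (1 + ‖x‖) ^ k) ∧
        ∀ ghat : EuclideanSpace ℝ (Fin n) → ℂ,
          (∀ y, ghat y = (((2 * π) ^ (-(n : ℝ) / 2) : ℝ) : ℂ) *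
            ∫ x : EuclideanSpace ℝ (Fin n), g j x *
              Complex.exp (-Complex.I * (inner ℝ x y : ℝ))) →
          Integrable (fun y : EuclideanSpace ℝ (Fin n) =>
            ‖ghat y‖ ^ q * Real.exp (q * t * ‖y‖ ^ 2) / (1 + ‖y‖) ^ l)) := by
  have hn0 : (0:ℝ) < n := by
    have : (0:ℕ) < n := by omega
    exact_mod_cast this
  have hk0 : 0 < k := lt_trans hn0 hk.1
  have hl0 : 0 < l := lt_trans hn0 hl.1
  have hs : 0 < s := lt_trans ht hst
  constructor
  · intro t₀ ht₀1 ht₀2 d hd H hH0 hHhom hHharm f hf fhat hfhat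
    have ht₀ : 0 < t₀ := lt_trans ht ht₀1
    have hf' : ∀ x, f x = (((((4*π*t₀) ^ (-(n:ℝ)/2)) * MvPolynomial.eval (x : Fin n → ℝ) H *
        Real.exp (-(1/(4*t₀)) * ‖x‖^2) : ℝ)) : ℂ) := by
      intro x
      rw [hf x, show -‖x‖^2/(4*t₀) = -(1/(4*t₀))*‖x‖^2 from by ring]
      congr 1
      ring
    refine aux_workhorse p q s t (1/(4*t₀)) _ k l hp hq hs ht (by positivity) ?_ ?_ hk0 hl0
      H f fhat hf' hfhat
    · exact one_div_lt_one_div_of_lt (by linarith) (by linarith)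
    · rw [show 1/(4*(1/(4*t₀))) = t₀ from by field_simp]
      exact ht₀1
  · set t₀ : ℝ := (t+s)/2 with ht₀def
    have ht₀1 : t < t₀ := by rw [ht₀def]; linarith
    have ht₀2 : t₀ < s := by rw [ht₀def]; linarith
    have ht₀ : 0 < t₀ := lt_trans ht ht₀1
    set i0 : Fin n := ⟨0, by omega⟩
    set g : ℕ → (EuclideanSpace ℝ (Fin n) → ℂ) := fun j x =>
      (((x i0)^j * Real.exp (-(1/(4*t₀)) * ‖x‖^2) : ℝ) : ℂ) with hgdef
    have hgf : ∀ j, ∀ x : EuclideanSpace ℝ (Fin n), g j x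
        = (((1 * MvPolynomial.eval (x : Fin n → ℝ) (MvPolynomial.X i0 ^ j) *
          Real.exp (-(1/(4*t₀)) * ‖x‖^2) : ℝ)) : ℂ) := by
      intro j x
      rw [hgdef]
      simp [map_pow]
    refine ⟨g, ?_, ?_⟩
    · rw [linearIndependent_iff']
      intro sfin c hsum j hj
      have hval : ∀ r : ℝ, ∑ j' ∈ sfin, c j' * ((r:ℂ)^j' *
          ((Real.exp (-(1/(4*t₀)) * r^2) : ℝ) : ℂ)) = 0 := by
        intro r
        have h1 := congrFun hsum (EuclideanSpace.single i0 r)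
        rw [Finset.sum_apply] at h1
        simp only [Pi.smul_apply, smul_eq_mul, Pi.zero_apply] at h1
        rw [← h1]
        refine Finset.sum_congr rfl fun j' _ => ?_
        congr 1
        simp only [hgdef]
        have h2 : (EuclideanSpace.single i0 r) i0 = r := by
          simp [EuclideanSpace.single_apply]
        have h3 : ‖EuclideanSpace.single i0 r‖ = |r| := by
          rw [EuclideanSpace.norm_single, Real.norm_eq_abs]
        rw [h2, h3, _root_.sq_abs]
        push_cast
        ring
      set P : Polynomial ℂ := ∑ j' ∈ sfin, Polynomial.C (c j') * Polynomial.X ^ j' with hPdef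
      have hroot : ∀ r : ℝ, Polynomial.eval ((r:ℝ):ℂ) P = 0 := by
        intro r
        have hE : ((Real.exp (-(1/(4*t₀)) * r^2) : ℝ) : ℂ) ≠ 0 := by
          exact_mod_cast (Real.exp_pos _).ne'
        have h4 := hval r
        rw [hPdef, Polynomial.eval_finset_sum]
        simp only [Polynomial.eval_mul, Polynomial.eval_C, Polynomial.eval_pow,
          Polynomial.eval_X]
        have h5 : (∑ j' ∈ sfin, c j' * (r:ℂ)^j') *
            ((Real.exp (-(1/(4*t₀)) * r^2) : ℝ) : ℂ) = 0 := by
          rw [Finset.sum_mul, ← h4]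
          exact Finset.sum_congr rfl fun j' _ => by ring
        rcases mul_eq_zero.1 h5 with h6 | h6
        · exact h6
        · exact absurd h6 hE
      have hP0 : P = 0 := by
        refine Polynomial.eq_zero_of_infinite_isRoot P ?_
        refine Set.infinite_of_injective_forall_mem (f := fun r : ℝ => ((r:ℝ):ℂ))
          Complex.ofReal_injective (fun r => ?_)
        exact hroot r
      have hc : c j = P.coeff j := by
        rw [hPdef, Polynomial.finset_sum_coeff]
        simp only [Polynomial.coeff_C_mul, Polynomial.coeff_X_pow]
        rw [Finset.sum_congr rfl (fun j' _ => by rw [mul_ite, mul_one, mul_zero]),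
          Finset.sum_ite_eq sfin j c, if_pos hj]
      rw [hc, hP0, Polynomial.coeff_zero]
    · intro j
      set Fhat : EuclideanSpace ℝ (Fin n) → ℂ := fun y =>
        (((2 * π) ^ (-(n : ℝ) / 2) : ℝ) : ℂ) *
          ∫ x : EuclideanSpace ℝ (Fin n), g j x *
            Complex.exp (-Complex.I * ((inner ℝ x y : ℝ):ℂ)) with hFdef
      have hwork := aux_workhorse p q s t (1/(4*t₀)) 1 k l hp hq hs ht (by positivity)
        (one_div_lt_one_div_of_lt (by linarith) (by linarith))
        (by rw [show 1/(4*(1/(4*t₀))) = t₀ from by field_simp]; exact ht₀1) hk0 hl0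
        (MvPolynomial.X i0 ^ j) (g j) Fhat (hgf j) (fun y => rfl)
      refine ⟨hwork.1, fun ghat hghat => ?_⟩
      have : ghat = Fhat := funext fun y => by rw [hghat y, hFdef]
      rw [this]
      exact hwork.2
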